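/- No-broadcasting for the identity channel: if dim H ≥ 2, there is no quantum channel B : L(H) → L(H ⊗ H) such that both marginals equal the identity, i.e., Tr_2(B(ρ)) = ρ and Tr_1(B(ρ)) = ρ for all states ρ. Consequently, the pair of channels (id, id) is not parallelly compatible. -/

import Mathlib

open scoped BigOperators ComplexOrder

/-- The Choi matrix of a linear map between matrix algebras. -/
def choi {α β : Type*} [Fintype α] [DecidableEq α]
    (Φ : Matrix α α ℂ →ₗ[ℂ] Matrix β β ℂ) : Matrix (β × α) (β × α) ℂ :=
  fun p q => Φ (Matrix.single p.2 q.2 1) p.1 q.1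

/-- Complete positivity, via positive semidefiniteness of the Choi matrix. -/
def IsCP {α β : Type*} [Fintype α] [DecidableEq α] [Fintype β]
    (Φ : Matrix α α ℂ →ₗ[ℂ] Matrix β β ℂ) : Prop :=
  (choi Φ).PosSemidef

/-- Partial trace over the second tensor factor. -/
noncomputable def ptr2 {n : ℕ} (M : Matrix (Fin n × Fin n) (Fin n × Fin n) ℂ) :
    Matrix (Fin n) (Fin n) ℂ :=
  fun i j => ∑ k, M (i, k) (j, k)

/-- Partial trace over the first tensor factor. -/
noncomputable def ptr1 {n : ℕ} (M : Matrix (Fin n × Fin n) (Fin n × Fin n) ℂ) :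
    Matrix (Fin n) (Fin n) ℂ :=
  fun i j => ∑ k, M (k, i) (k, j)

/-- Parallel compatibility of a pair of channels `E, F : L(ℂ^n) → L(ℂ^n)`:
there is a mother instrument (here with singleton classical outcome structure,
i.e., a channel given as a sum of CP maps) into `ℂ^n ⊗ ℂ^n` whose marginals are
`E` and `F`. -/
def ParallelCompatChanPair {n : ℕ}
    (E F : Matrix (Fin n) (Fin n) ℂ →ₗ[ℂ] Matrix (Fin n) (Fin n) ℂ) : Prop :=
  ∃ (k : ℕ) (H : Fin k →
      (Matrix (Fin n) (Fin n) ℂ →ₗ[ℂ] Matrix (Fin n × Fin n) (Fin n × Fin n) ℂ)),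
    (∀ w, IsCP (H w)) ∧ (∀ ρ, ((∑ w, H w) ρ).trace = ρ.trace) ∧
    (∀ ρ, E ρ = ptr2 ((∑ w, H w) ρ)) ∧ (∀ ρ, F ρ = ptr1 ((∑ w, H w) ρ))

/- ### Auxiliary lemmas -/

open Matrix

section Aux

lemma psd_diag_nonneg {m : Type*} [Fintype m] [DecidableEq m] {M : Matrix m m ℂ}
    (hM : M.PosSemidef) (p : m) : 0 ≤ M p p := by
  simpa [dotProduct, Matrix.mulVec, Pi.single_apply, apply_ite] using hM.dotProduct_mulVec_nonneg (Pi.single p 1)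

lemma psd_col_zero {m : Type*} [Fintype m] [DecidableEq m] {M : Matrix m m ℂ}
    (hM : M.PosSemidef) {q : m} (hq : M q q = 0) (p : m) : M p q = 0 := by
  have h0 : dotProduct (star (Pi.single q 1)) (M *ᵥ Pi.single q 1) = 0 := by
    simpa [dotProduct, Matrix.mulVec, Pi.single_apply, apply_ite] using hq
  have hcol := (hM.dotProduct_mulVec_zero_iff (Pi.single q 1)).mp h0
  have := congrFun hcol p
  simpa [Matrix.mulVec, dotProduct, Pi.single_apply] using this

lemma psd_row_zero {m : Type*} [Fintype m] [DecidableEq m] {M : Matrix m m ℂ}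
    (hM : M.PosSemidef) {p : m} (hp : M p p = 0) (q : m) : M p q = 0 := by
  have h1 := psd_col_zero hM hp q
  have h2 := hM.isHermitian.apply p q
  rw [h1] at h2
  simpa using h2.symm

lemma psd_smul {m : Type*} [Fintype m] {M : Matrix m m ℂ}
    (hM : M.PosSemidef) {c : ℂ} (hc : 0 ≤ c) : (c • M).PosSemidef := by
  refine Matrix.PosSemidef.of_dotProduct_mulVec_nonneg ?_ ?_
  · have hcs : star c = c := (IsSelfAdjoint.of_nonneg hc).star_eq
    rw [Matrix.IsHermitian, Matrix.conjTranspose_smul, hcs, hM.isHermitian.eq]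
  · intro x
    rw [Matrix.smul_mulVec, dotProduct_smul, smul_eq_mul]
    exact mul_nonneg hc (hM.dotProduct_mulVec_nonneg x)

lemma half_nonneg : (0 : ℂ) ≤ 2⁻¹ := by
  rw [Complex.le_def]; norm_num

lemma linB {n : ℕ} (B : Matrix (Fin n) (Fin n) ℂ →ₗ[ℂ] Matrix (Fin n × Fin n) (Fin n × Fin n) ℂ)
    (ρ : Matrix (Fin n) (Fin n) ℂ) (p q : Fin n × Fin n) :
    B ρ p q = ∑ i, ∑ j, ρ i j * choi B (p, i) (q, j) := by
  conv_lhs => rw [Matrix.matrix_eq_sum_single ρ]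
  simp only [map_sum, Matrix.sum_apply]
  refine Finset.sum_congr rfl fun i _ => Finset.sum_congr rfl fun j _ => ?_
  have h : Matrix.single i j (ρ i j) = ρ i j • Matrix.single i j 1 := by
    rw [Matrix.smul_single, smul_eq_mul, mul_one]
  rw [h, _root_.map_smul, Matrix.smul_apply, smul_eq_mul]
  rfl

/-- Rank-one projector attached to a vector. -/
def outer {n : ℕ} (v : Fin n → ℂ) : Matrix (Fin n) (Fin n) ℂ :=
  Matrix.of fun i j => v i * star (v j)

def Vmat {n : ℕ} (v : Fin n → ℂ) :
    Matrix ((Fin n × Fin n) × Fin n) (Fin n × Fin n) ℂ :=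
  Matrix.of fun y q => if y.1 = q then star (v y.2) else 0

lemma outer_conj {n : ℕ}
    (B : Matrix (Fin n) (Fin n) ℂ →ₗ[ℂ] Matrix (Fin n × Fin n) (Fin n × Fin n) ℂ)
    (v : Fin n → ℂ) :
    B (outer v) = (Vmat v)ᴴ * choi B * (Vmat v) := by
  ext p q
  rw [linB]
  conv_rhs => rw [Matrix.mul_apply]
  simp only [Matrix.mul_apply, Matrix.conjTranspose_apply, Vmat, Matrix.of_apply,
    Finset.sum_mul, apply_ite (star : ℂ → ℂ), star_star, star_zero, ite_mul, mul_ite,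
    zero_mul, mul_zero, Fintype.sum_prod_type, Finset.sum_ite_irrel, Finset.sum_const_zero,
    Finset.sum_ite_eq', Finset.mem_univ, if_true]
  rw [Finset.sum_comm]
  refine Finset.sum_congr rfl fun i _ => Finset.sum_congr rfl fun j _ => ?_
  simp only [outer, Matrix.of_apply]
  ring

lemma posB {n : ℕ} {B : Matrix (Fin n) (Fin n) ℂ →ₗ[ℂ] Matrix (Fin n × Fin n) (Fin n × Fin n) ℂ}
    (hB : IsCP B) (v : Fin n → ℂ) : (B (outer v)).PosSemidef := by
  rw [outer_conj]
  exact hB.conjTranspose_mul_mul_same _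

lemma outer_psd {n : ℕ} (v : Fin n → ℂ) : (outer v).PosSemidef := by
  have h := Matrix.posSemidef_conjTranspose_mul_self
    (Matrix.of fun (_ : Fin 1) j => star (v j))
  convert h using 1
  ext i j
  simp [outer, Matrix.mul_apply, mul_comm]

lemma choi_sum {n : ℕ} {k : ℕ}
    (H : Fin k → (Matrix (Fin n) (Fin n) ℂ →ₗ[ℂ] Matrix (Fin n × Fin n) (Fin n × Fin n) ℂ)) :
    choi (∑ w, H w) = ∑ w, choi (H w) := by
  ext p q
  simp [choi, LinearMap.sum_apply, Matrix.sum_apply]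

/- The specific vectors and states used in the no-broadcasting argument. -/

def vA {n : ℕ} (a : Fin n) : Fin n → ℂ := fun i => if i = a then 1 else 0

def vP {n : ℕ} (a b : Fin n) : Fin n → ℂ := fun i => if i = a ∨ i = b then 1 else 0

def vM {n : ℕ} (a b : Fin n) : Fin n → ℂ :=
  fun i => if i = a then 1 else if i = b then -1 else 0

lemma trace_vA {n : ℕ} (a : Fin n) : (outer (vA a)).trace = 1 := by
  simp [Matrix.trace, Matrix.diag, outer, vA, apply_ite (star : ℂ → ℂ),
    ite_mul, mul_ite, Finset.sum_ite_eq']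

lemma vA_diag_ne {n : ℕ} {a c : Fin n} (h : c ≠ a) : outer (vA a) c c = 0 := by
  simp [outer, vA, h]

lemma diag_vP {n : ℕ} {a b : Fin n} (hab : a ≠ b) (i : Fin n) :
    ((2⁻¹ : ℂ) • outer (vP a b)) i i
      = (if i = a then (2⁻¹ : ℂ) else 0) + (if i = b then 2⁻¹ else 0) := by
  by_cases hia : i = a <;> by_cases hib : i = b <;>
    simp_all [outer, vP]

lemma diag_vM {n : ℕ} {a b : Fin n} (hab : a ≠ b) (i : Fin n) :
    ((2⁻¹ : ℂ) • outer (vM a b)) i i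
      = (if i = a then (2⁻¹ : ℂ) else 0) + (if i = b then 2⁻¹ else 0) := by
  by_cases hia : i = a <;> by_cases hib : i = b <;>
    simp_all [outer, vM]

lemma trace_vP {n : ℕ} {a b : Fin n} (hab : a ≠ b) :
    ((2⁻¹ : ℂ) • outer (vP a b)).trace = 1 := by
  have h : ((2⁻¹ : ℂ) • outer (vP a b)).trace = ∑ i, ((2⁻¹ : ℂ) • outer (vP a b)) i i := rfl
  rw [h]
  simp only [diag_vP hab]
  rw [Finset.sum_add_distrib]
  simp [Finset.sum_ite_eq']
  norm_num

lemma trace_vM {n : ℕ} {a b : Fin n} (hab : a ≠ b) :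
    ((2⁻¹ : ℂ) • outer (vM a b)).trace = 1 := by
  have h : ((2⁻¹ : ℂ) • outer (vM a b)).trace = ∑ i, ((2⁻¹ : ℂ) • outer (vM a b)) i i := rfl
  rw [h]
  simp only [diag_vM hab]
  rw [Finset.sum_add_distrib]
  simp [Finset.sum_ite_eq']
  norm_num

lemma rhosum {n : ℕ} {a b : Fin n} (hab : a ≠ b) :
    (2⁻¹ : ℂ) • outer (vP a b) + (2⁻¹ : ℂ) • outer (vM a b)
      = outer (vA a) + outer (vA b) := by
  ext i j
  simp only [Matrix.add_apply, Matrix.smul_apply, outer, Matrix.of_apply, smul_eq_mul,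
    vP, vM, vA]
  by_cases hia : i = a <;> by_cases hib : i = b <;>
    by_cases hja : j = a <;> by_cases hjb : j = b <;>
    simp_all <;> norm_num

lemma vP_ab {n : ℕ} {a b : Fin n} (hab : a ≠ b) :
    ((2⁻¹ : ℂ) • outer (vP a b)) a b = 2⁻¹ := by
  simp [outer, vP, hab]

/-- The first half of the statement: no broadcasting channel for the identity. -/
lemma noBroadcast {n : ℕ} (hn : 2 ≤ n) :
    ¬ ∃ B : Matrix (Fin n) (Fin n) ℂ →ₗ[ℂ] Matrix (Fin n × Fin n) (Fin n × Fin n) ℂ,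
        IsCP B ∧ (∀ ρ, (B ρ).trace = ρ.trace) ∧
        (∀ ρ : Matrix (Fin n) (Fin n) ℂ, ρ.PosSemidef → ρ.trace = 1 →
          ptr2 (B ρ) = ρ ∧ ptr1 (B ρ) = ρ) := by
  rintro ⟨B, hCP, htr, hmarg⟩
  have h0 : 0 < n := by omega
  have h1 : 1 < n := by omega
  set a : Fin n := ⟨0, h0⟩
  set b : Fin n := ⟨1, h1⟩
  have hab : a ≠ b := by simp [a, b, Fin.ext_iff]
  set ρp := (2⁻¹ : ℂ) • outer (vP a b) with hρp
  set ρm := (2⁻¹ : ℂ) • outer (vM a b) with hρm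
  set ρa := outer (vA a) with hρa
  set ρb := outer (vA b) with hρb
  -- positivity of the images
  have hNpsd : (B ρp).PosSemidef := by
    rw [hρp, _root_.map_smul]; exact psd_smul (posB hCP _) half_nonneg
  have hPpsd : (B ρm).PosSemidef := by
    rw [hρm, _root_.map_smul]; exact psd_smul (posB hCP _) half_nonneg
  have hMapsd : (B ρa).PosSemidef := posB hCP _
  have hMbpsd : (B ρb).PosSemidef := posB hCP _
  -- marginals
  obtain ⟨h2p, h1p⟩ := hmarg ρp (psd_smul (outer_psd _) half_nonneg) (trace_vP hab)
  obtain ⟨h2a, h1a⟩ := hmarg ρa (outer_psd _) (trace_vA a)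
  obtain ⟨h2b, h1b⟩ := hmarg ρb (outer_psd _) (trace_vA b)
  -- generic tool: zero diagonal entries from a vanishing sum of diagonal entries
  have key : ∀ (M : Matrix (Fin n × Fin n) (Fin n × Fin n) ℂ), M.PosSemidef →
      ∀ (g : Fin n → Fin n × Fin n), (∑ k, M (g k) (g k)) = 0 → ∀ k, M (g k) (g k) = 0 := by
    intro M hM g hsum k
    have := (Finset.sum_eq_zero_iff_of_nonneg
      (fun k _ => psd_diag_nonneg hM (g k))).mp hsum
    exact this k (Finset.mem_univ k)
  -- (1) diagonal of B ρp vanishes at (a,k) for k ∉ {a,b}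
  have hNdiag1 : ∀ k, k ≠ a → k ≠ b → (B ρp) (a, k) (a, k) = 0 := by
    intro k hka hkb
    refine key (B ρp) hNpsd (fun i => (i, k)) ?_ a
    have h : (∑ i, (B ρp) (i, k) (i, k)) = ρp k k := congrFun (congrFun h1p k) k
    rw [h, hρp, diag_vP hab k, if_neg hka, if_neg hkb, add_zero]
  -- diagonal entries of B ρa, B ρb at (a,b) and (b,a)
  have hMa_ab : (B ρa) (a, b) (a, b) = 0 := by
    refine key (B ρa) hMapsd (fun i => (i, b)) ?_ a
    have h : (∑ i, (B ρa) (i, b) (i, b)) = ρa b b := congrFun (congrFun h1a b) b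
    rw [h, hρa, vA_diag_ne hab.symm]
  have hMb_ab : (B ρb) (a, b) (a, b) = 0 := by
    refine key (B ρb) hMbpsd (fun k => (a, k)) ?_ b
    have h : (∑ k, (B ρb) (a, k) (a, k)) = ρb a a := congrFun (congrFun h2b a) a
    rw [h, hρb, vA_diag_ne hab]
  have hMa_ba : (B ρa) (b, a) (b, a) = 0 := by
    refine key (B ρa) hMapsd (fun k => (b, k)) ?_ a
    have h : (∑ k, (B ρa) (b, k) (b, k)) = ρa b b := congrFun (congrFun h2a b) b
    rw [h, hρa, vA_diag_ne hab.symm]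
  have hMb_ba : (B ρb) (b, a) (b, a) = 0 := by
    refine key (B ρb) hMbpsd (fun i => (i, a)) ?_ b
    have h : (∑ i, (B ρb) (i, a) (i, a)) = ρb a a := congrFun (congrFun h1b a) a
    rw [h, hρb, vA_diag_ne hab]
  -- N + P = Ma + Mb
  have hNP : B ρp + B ρm = B ρa + B ρb := by
    rw [← map_add, ← map_add, hρp, hρm, hρa, hρb, rhosum hab]
  have entryNP : ∀ p : Fin n × Fin n,
      (B ρp) p p + (B ρm) p p = (B ρa) p p + (B ρb) p p := by
    intro p
    have := congrFun (congrFun hNP p) p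
    simpa [Matrix.add_apply] using this
  have hNab : (B ρp) (a, b) (a, b) = 0 := by
    have h := entryNP (a, b)
    rw [hMa_ab, hMb_ab, add_zero] at h
    exact ((add_eq_zero_iff_of_nonneg (psd_diag_nonneg hNpsd _)
      (psd_diag_nonneg hPpsd _)).mp h).1
  have hNba : (B ρp) (b, a) (b, a) = 0 := by
    have h := entryNP (b, a)
    rw [hMa_ba, hMb_ba, add_zero] at h
    exact ((add_eq_zero_iff_of_nonneg (psd_diag_nonneg hNpsd _)
      (psd_diag_nonneg hPpsd _)).mp h).1
  -- final contradiction
  have hfin : (∑ k, (B ρp) (a, k) (b, k)) = ρp a b := congrFun (congrFun h2p a) b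
  have hzero : (∑ k, (B ρp) (a, k) (b, k)) = 0 := by
    refine Finset.sum_eq_zero fun k _ => ?_
    by_cases hka : k = a
    · subst hka
      exact psd_col_zero hNpsd hNba (a, a)
    · by_cases hkb : k = b
      · subst hkb
        exact psd_row_zero hNpsd hNab (b, b)
      · exact psd_row_zero hNpsd (hNdiag1 k hka hkb) (b, k)
  rw [hzero, hρp, vP_ab hab] at hfin
  norm_num at hfin

end Aux

/-- no-broadcasting for the identity channel: for `n ≥ 2` there is no
channel `B : L(ℂ^n) → L(ℂ^n ⊗ ℂ^n)` both of whose marginals are the identity on all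
states; consequently the pair `(id, id)` is not parallelly compatible. -/
theorem stmt16 {n : ℕ} (hn : 2 ≤ n) :
    (¬ ∃ B : Matrix (Fin n) (Fin n) ℂ →ₗ[ℂ] Matrix (Fin n × Fin n) (Fin n × Fin n) ℂ,
        IsCP B ∧ (∀ ρ, (B ρ).trace = ρ.trace) ∧
        (∀ ρ : Matrix (Fin n) (Fin n) ℂ, ρ.PosSemidef → ρ.trace = 1 →
          ptr2 (B ρ) = ρ ∧ ptr1 (B ρ) = ρ)) ∧
    ¬ ParallelCompatChanPair (LinearMap.id (M := Matrix (Fin n) (Fin n) ℂ))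
        (LinearMap.id (M := Matrix (Fin n) (Fin n) ℂ)) := by
  refine ⟨noBroadcast hn, ?_⟩
  rintro ⟨k, H, hcp, htr, hE, hF⟩
  refine noBroadcast hn ⟨∑ w, H w, ?_, htr, ?_⟩
  · rw [IsCP, choi_sum]
    exact Finset.sum_induction _ _ (fun _ _ hx hy => hx.add hy)
      Matrix.PosSemidef.zero (fun w _ => hcp w)
  · intro ρ _ _
    exact ⟨(hE ρ).symm, (hF ρ).symm⟩
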